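/- For all n, k ∈ ℕ₀: ( b_{n+k+1} − P_1(1−q^n) ) / a_{n+k+1} > q^{−(k+1)} − 2. -/

import Mathlib

open scoped BigOperators

/-- Recurrence coefficient `a_n` of the little q-Legendre polynomials. -/
noncomputable def aC (q : ℝ) : ℕ → ℝ
  | 0 => 1 / (q + 1)
  | n + 1 => q ^ (n + 1) * (1 + q) * (1 - q ^ (n + 2)) /
      ((1 - q ^ (2 * n + 3)) * (1 + q ^ (n + 2)))

/-- Recurrence coefficient `c_n` of the little q-Legendre polynomials. -/
noncomputable def cC (q : ℝ) : ℕ → ℝ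
  | 0 => 0
  | n + 1 => q ^ (n + 1) * (1 + q) * (1 - q ^ (n + 1)) /
      ((1 - q ^ (2 * n + 3)) * (1 + q ^ (n + 1)))

/-- Recurrence coefficient `b_n = 1 - a_n - c_n`. -/
noncomputable def bC (q : ℝ) (n : ℕ) : ℝ := 1 - aC q n - cC q n

/-- The little q-Legendre polynomials, as functions `ℝ → ℝ`:
`P 0 x = 1`, `P 1 x = (q+1)x - q`, and
`P 1 x * P (n+1) x = a_{n+1} P (n+2) x + b_{n+1} P (n+1) x + c_{n+1} P n x`. -/
noncomputable def P (q : ℝ) : ℕ → ℝ → ℝ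
  | 0, _ => 1
  | 1, x => (q + 1) * x - q
  | n + 2, x =>
      (((q + 1) * x - q) * P q (n + 1) x - bC q (n + 1) * P q (n + 1) x
        - cC q (n + 1) * P q n x) / aC q (n + 1)

/-- Haar weights of the little q-Legendre hypergroup. -/
noncomputable def haar (q : ℝ) (n : ℕ) : ℝ := (1 - q ^ (2 * n + 1)) / (q ^ n * (1 - q))

/-- Finite q-Pochhammer symbol `(a;q)_m`. -/
noncomputable def qpoch (q A : ℝ) (m : ℕ) : ℝ := ∏ j ∈ Finset.range m, (1 - A * q ^ j)

/-- Infinite q-Pochhammer symbol `(a;q)_∞`. -/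
noncomputable def qpochInf (q A : ℝ) : ℝ := ∏' j : ℕ, (1 - A * q ^ j)

lemma key (q d e : ℝ) (hq0 : 0 < q) (hq1 : q < 1) (hd0 : 0 < d)
    (hd1 : d < 1) (he0 : 0 < e) :
    ((1 - d*(1+q)*(1-q*d)/((1-q*d^2)*(1+q*d)) - d*(1+q)*(1-d)/((1-q*d^2)*(1+d)))
      - ((q+1)*(1 - d/e) - q)) / (d*(1+q)*(1-q*d)/((1-q*d^2)*(1+q*d)))
      > e⁻¹ - 2 := by
  have h1 : 0 < 1 - q*d^2 := by nlinarith
  have h2 : 0 < 1 + q*d := by positivity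
  have h3 : 0 < 1 + d := by positivity
  have h4 : 0 < 1 - q*d := by nlinarith
  have hid : ((1 - d*(1+q)*(1-q*d)/((1-q*d^2)*(1+q*d)) - d*(1+q)*(1-d)/((1-q*d^2)*(1+d)))
      - ((q+1)*(1 - d/e) - q)) / (d*(1+q)*(1-q*d)/((1-q*d^2)*(1+q*d))) - (e⁻¹ - 2)
      = (q*d*(1+d)*(2 - d - q*d^2) + 2*d*e*(1-q)) / (e*(1-q*d)*(1+d)) := by
    field_simp [h1.ne', h2.ne', h3.ne', h4.ne', he0.ne', hd0.ne', (by rw [mul_comm]; exact h1.ne' : (1:ℝ) - d^2*q ≠ 0), (by rw [mul_comm]; exact h4.ne' : (1:ℝ) - d*q ≠ 0), (by rw [mul_comm]; exact h2.ne' : (1:ℝ) + d*q ≠ 0)]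
    ring
  rw [gt_iff_lt, ← sub_pos, hid]
  have h5 : 0 < 2 - d - q*d^2 := by nlinarith
  have hF : 0 < q*d*(1+d)*(2 - d - q*d^2) + 2*d*e*(1-q) := by
    have t1 := mul_pos (mul_pos (mul_pos hq0 hd0) h3) h5
    have t2 := mul_pos (mul_pos (mul_pos two_pos hd0) he0) (by linarith : (0:ℝ) < 1 - q)
    nlinarith [t1, t2]
  positivity

/-- for all `n, k`: `(b_{n+k+1} - P₁(1-qⁿ)) / a_{n+k+1} > q^{-(k+1)} - 2`. -/
theorem stmt9 (q : ℝ) (hq0 : 0 < q) (hq1 : q < 1) :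
    ∀ n k : ℕ,
      (bC q (n + k + 1) - P q 1 (1 - q ^ n)) / aC q (n + k + 1) > (q ^ (k + 1))⁻¹ - 2 := by
  intro n k
  have hd0 : 0 < q ^ (n + k + 1) := pow_pos hq0 _
  have hd1 : q ^ (n + k + 1) < 1 := pow_lt_one₀ hq0.le hq1 (by omega)
  have he0 : 0 < q ^ (k + 1) := pow_pos hq0 _
  have hp1 : q ^ (n + k + 2) = q * q ^ (n + k + 1) := by
    rw [show n + k + 2 = (n + k + 1) + 1 from rfl, pow_succ]; ring
  have hp2 : q ^ (2 * (n + k) + 3) = q * (q ^ (n + k + 1)) ^ 2 := by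
    rw [show 2 * (n + k) + 3 = (n + k + 1) + (n + k + 1) + 1 by ring, pow_succ, pow_add]
    ring
  have hqn : q ^ n = q ^ (n + k + 1) / q ^ (k + 1) := by
    rw [eq_div_iff he0.ne', ← pow_add]; ring_nf
  have haC : aC q (n + k + 1) = q ^ (n + k + 1) * (1 + q) * (1 - q * q ^ (n + k + 1)) /
      ((1 - q * (q ^ (n + k + 1)) ^ 2) * (1 + q * q ^ (n + k + 1))) := by
    show q ^ (n + k + 1) * (1 + q) * (1 - q ^ (n + k + 2)) /
      ((1 - q ^ (2 * (n + k) + 3)) * (1 + q ^ (n + k + 2))) = _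
    rw [hp1, hp2]
  have hcC : cC q (n + k + 1) = q ^ (n + k + 1) * (1 + q) * (1 - q ^ (n + k + 1)) /
      ((1 - q * (q ^ (n + k + 1)) ^ 2) * (1 + q ^ (n + k + 1))) := by
    show q ^ (n + k + 1) * (1 + q) * (1 - q ^ (n + k + 1)) /
      ((1 - q ^ (2 * (n + k) + 3)) * (1 + q ^ (n + k + 1))) = _
    rw [hp2]
  have hP : P q 1 (1 - q ^ n) = (q + 1) * (1 - q ^ (n + k + 1) / q ^ (k + 1)) - q := by
    show (q + 1) * (1 - q ^ n) - q = _
    rw [hqn]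
  rw [bC, haC, hcC, hP]
  exact key q (q ^ (n + k + 1)) (q ^ (k + 1)) hq0 hq1 hd0 hd1 he0
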